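/- The modified Hamming distance is a quasimetric when defined as: for 64-bit bitvectors a,b, m_hd(a,b) = HDist(a,b) if HDist(a,b) ≤ 32, and m_hd(a,b) = 64 − HDist(a,b) + 1 otherwise, where HDist is the Hamming distance. Then m_hd(a,b) = 0 iff a = b, m_hd is symmetric, and m_hd satisfies the triangle inequality. -/

import Mathlib

/-- Hamming distance between two 64-bit bitvectors. -/
def hDist (a b : BitVec 64) : ℕ :=
  ∑ i ∈ Finset.range 64, (if a.getLsbD i ≠ b.getLsbD i then 1 else 0)

/-- Modified Hamming distance folding distances above 32. -/
def mhd (a b : BitVec 64) : ℕ :=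
  if hDist a b ≤ 32 then hDist a b else 64 - hDist a b + 1

lemma hDist_symm (a b : BitVec 64) : hDist a b = hDist b a := by
  unfold hDist
  apply Finset.sum_congr rfl
  intro i _
  by_cases h : a.getLsbD i = b.getLsbD i <;> simp [h, Ne, eq_comm]

lemma hDist_le (a b : BitVec 64) : hDist a b ≤ 64 := by
  unfold hDist
  calc ∑ i ∈ Finset.range 64, (if a.getLsbD i ≠ b.getLsbD i then 1 else 0)
      ≤ ∑ _i ∈ Finset.range 64, 1 := by
        apply Finset.sum_le_sum; intro i _; split <;> simp
    _ = 64 := by simp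

lemma hDist_eq_zero_iff (a b : BitVec 64) : hDist a b = 0 ↔ a = b := by
  constructor
  · intro h
    apply BitVec.eq_of_getLsbD_eq
    intro i hi
    by_contra hne
    have hmem : (i : ℕ) ∈ Finset.range 64 := Finset.mem_range.2 hi
    have := Finset.sum_eq_zero_iff.1 h (i : ℕ) hmem
    simp [hne] at this
  · rintro rfl
    unfold hDist
    simp

lemma hDist_triangle (a b c : BitVec 64) : hDist a c ≤ hDist a b + hDist b c := by
  unfold hDist
  rw [← Finset.sum_add_distrib]
  apply Finset.sum_le_sum
  intro i _
  by_cases h1 : a.getLsbD i = b.getLsbD i <;> by_cases h2 : b.getLsbD i = c.getLsbD i <;>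
    simp [h1, h2] <;> split <;> omega

lemma hDist_sum_le (a b c : BitVec 64) :
    hDist a b + hDist b c + hDist a c ≤ 128 := by
  unfold hDist
  rw [← Finset.sum_add_distrib, ← Finset.sum_add_distrib]
  calc (∑ i ∈ Finset.range 64,
        ((if a.getLsbD i ≠ b.getLsbD i then 1 else 0) +
         (if b.getLsbD i ≠ c.getLsbD i then 1 else 0) +
         (if a.getLsbD i ≠ c.getLsbD i then 1 else 0)))
      ≤ ∑ _i ∈ Finset.range 64, 2 := by
        apply Finset.sum_le_sum
        intro i _
        cases ha : a.getLsbD i <;> cases hb : b.getLsbD i <;> cases hc : c.getLsbD i <;> simp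
    _ = 128 := by simp

theorem stmt_14 :
    (∀ a b : BitVec 64, mhd a b = 0 ↔ a = b) ∧
    (∀ a b : BitVec 64, mhd a b = mhd b a) ∧
    (∀ a b c : BitVec 64, mhd a c ≤ mhd a b + mhd b c) := by
  refine ⟨?_, ?_, ?_⟩
  · intro a b
    rw [← hDist_eq_zero_iff a b]
    unfold mhd
    have := hDist_le a b
    split <;> omega
  · intro a b
    unfold mhd
    rw [hDist_symm a b]
  · intro a b c
    unfold mhd
    have h1 := hDist_triangle a b c
    have h2 := hDist_triangle b a c
    have h3 := hDist_triangle a c b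
    have h4 := hDist_sum_le a b c
    have l1 := hDist_le a b
    have l2 := hDist_le b c
    have l3 := hDist_le a c
    rw [hDist_symm b a] at h2
    rw [hDist_symm c b] at h3
    split <;> split <;> split <;> omega
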